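/- Let C_1 and C_2 be monochromatic directed cycles (each with all arcs of a single color). The Cartesian product C_1 □ C_2 has a bikernel by monochromatic paths if and only if C_1 and C_2 have the same length and opposite colors. -/

import Mathlib

/-- A bicolored digraph is given by two arc relations `A1` (color-1 arcs) and `A2`
(color-2 arcs). A monochromatic path of color `i` is a nonempty chain of `Ai`-arcs,
i.e. `Relation.TransGen Ai`. A set `B` is a bikernel by monochromatic paths if it is
nonempty, independent by monochromatic paths, absorbent with color 1 and dominant
with color 2. -/
def IsBikernel {V : Type*} (A1 A2 : V → V → Prop) (B : Set V) : Prop :=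
  B.Nonempty ∧
  (∀ u ∈ B, ∀ v ∈ B, u ≠ v →
    ¬ Relation.TransGen A1 u v ∧ ¬ Relation.TransGen A2 u v) ∧
  (∀ v, v ∉ B → ∃ b ∈ B, Relation.TransGen A1 v b) ∧
  (∀ v, v ∉ B → ∃ b ∈ B, Relation.TransGen A2 b v)

/-- The bicolored directed cycle on `Fin n` with arcs `(x_i, x_{(i+1) mod n})`, the
arc leaving `x_i` having color `c i` (color 1 is `0`, color 2 is `1`). -/
def cycArc (n : ℕ) (c : ℕ → Fin 2) (col : Fin 2) : Fin n → Fin n → Prop :=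
  fun x y => (y : ℕ) = ((x : ℕ) + 1) % n ∧ c (x : ℕ) = col

/-- The arc relation of the Cartesian product of two digraphs restricted to one
color. -/
def boxArc {V W : Type*} (AG : V → V → Prop) (AH : W → W → Prop) :
    V × W → V × W → Prop :=
  fun p q => (p.1 = q.1 ∧ AH p.2 q.2) ∨ (p.2 = q.2 ∧ AG p.1 q.1)

open Fin.NatCast Fin.CommRing in
/-- In a directed cycle of length `n ≥ 2`, every vertex is reachable from every
vertex by a nonempty path. -/
lemma cyc_reach (n : ℕ) (hn : 2 ≤ n) (x y : Fin n) :
    Relation.TransGen (fun a b : Fin n => (b : ℕ) = ((a : ℕ) + 1) % n) x y := by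
  haveI : NeZero n := ⟨by omega⟩
  set R := fun a b : Fin n => (b : ℕ) = ((a : ℕ) + 1) % n with hR
  have hstep : ∀ a : Fin n, R a (a + 1) := by
    intro a
    have h1 : ((1 : Fin n) : ℕ) = 1 := Fin.val_one' n ▸ Nat.mod_eq_of_lt (by omega)
    simp [hR, Fin.val_add, h1]
  have key : ∀ (k : ℕ) (a : Fin n), Relation.TransGen R a (a + (k : Fin n) + 1) := by
    intro k
    induction k with
    | zero => intro a; simpa using Relation.TransGen.single (hstep a)
    | succ m ih =>
        intro a
        have : a + ((m + 1 : ℕ) : Fin n) + 1 = (a + (m : Fin n) + 1) + 1 := by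
          push_cast; ring
        rw [this]
        exact (ih a).tail (hstep _)
  have hy : y = x + ((y - x - 1 : Fin n).val : Fin n) + 1 := by
    rw [Fin.cast_val_eq_self]; ring
  rw [hy]
  exact key _ x

lemma tg_right {V W : Type*} {S : V → V → Prop} (p q : V × W) :
    Relation.TransGen (fun p q : V × W => p.2 = q.2 ∧ S p.1 q.1) p q ↔
      p.2 = q.2 ∧ Relation.TransGen S p.1 q.1 := by
  constructor
  · intro h
    induction h with
    | single h => exact ⟨h.1, .single h.2⟩
    | tail _ h ih => exact ⟨ih.1.trans h.1, ih.2.tail h.2⟩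
  · rintro ⟨he, h⟩
    obtain ⟨a, b⟩ := p; obtain ⟨c, d⟩ := q
    dsimp at he ⊢; subst he
    exact Relation.TransGen.lift (p := fun p q : V × W => p.2 = q.2 ∧ S p.1 q.1) (fun v => (v, b)) (fun x y hxy => ⟨rfl, hxy⟩) _ _ h

lemma tg_left {V W : Type*} {S : W → W → Prop} (p q : V × W) :
    Relation.TransGen (fun p q : V × W => p.1 = q.1 ∧ S p.2 q.2) p q ↔
      p.1 = q.1 ∧ Relation.TransGen S p.2 q.2 := by
  constructor
  · intro h
    induction h with
    | single h => exact ⟨h.1, .single h.2⟩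
    | tail _ h ih => exact ⟨ih.1.trans h.1, ih.2.tail h.2⟩
  · rintro ⟨he, h⟩
    obtain ⟨a, b⟩ := p; obtain ⟨c, d⟩ := q
    dsimp at he ⊢; subst he
    exact Relation.TransGen.lift (p := fun p q : V × W => p.1 = q.1 ∧ S p.2 q.2) (fun v => (a, v)) (fun x y hxy => ⟨rfl, hxy⟩) _ _ h

lemma transGen_empty {α : Type*} {R : α → α → Prop} (h : ∀ a b, ¬ R a b) {a b : α} :
    ¬ Relation.TransGen R a b := by
  intro hab
  induction hab with
  | single h' => exact h _ _ h'
  | tail _ h' _ => exact h _ _ h'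

lemma tgFix1 {V : Type*} (n : ℕ) (p q : V × Fin n) :
    Relation.TransGen (fun p q : V × Fin n => p.1 = q.1 ∧ (q.2 : ℕ) = ((p.2 : ℕ) + 1) % n) p q ↔
      p.1 = q.1 ∧ Relation.TransGen (fun a b : Fin n => (b : ℕ) = ((a : ℕ) + 1) % n) p.2 q.2 :=
  tg_left (S := fun a b : Fin n => (b : ℕ) = ((a : ℕ) + 1) % n) p q

lemma tgFix2 {W : Type*} (n : ℕ) (p q : Fin n × W) :
    Relation.TransGen (fun p q : Fin n × W => p.2 = q.2 ∧ (q.1 : ℕ) = ((p.1 : ℕ) + 1) % n) p q ↔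
      p.2 = q.2 ∧ Relation.TransGen (fun a b : Fin n => (b : ℕ) = ((a : ℕ) + 1) % n) p.1 q.1 :=
  tg_right (S := fun a b : Fin n => (b : ℕ) = ((a : ℕ) + 1) % n) p q

/-- The Cartesian product of two monochromatic directed cycles (of colors `b1`, `b2`)
has a bikernel iff the cycles have the same length and opposite colors. -/
theorem box_mono_cycles_bikernel_iff (n1 n2 : ℕ) (h1 : 2 ≤ n1) (h2 : 2 ≤ n2)
    (b1 b2 : Fin 2) :
    (∃ B, IsBikernel
        (boxArc (cycArc n1 (fun _ => b1) 0) (cycArc n2 (fun _ => b2) 0))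
        (boxArc (cycArc n1 (fun _ => b1) 1) (cycArc n2 (fun _ => b2) 1)) B) ↔
      (n1 = n2 ∧ b1 ≠ b2) := by
  haveI : NeZero n1 := ⟨by omega⟩
  haveI : NeZero n2 := ⟨by omega⟩
  have h01 : ((0 : Fin n1) : ℕ) = 0 := rfl
  have h11 : ((1 : Fin n1) : ℕ) = 1 := Fin.val_one' n1 ▸ Nat.mod_eq_of_lt (by omega)
  constructor
  · rintro ⟨B, hne, hind, habs, hdom⟩
    have hcases : ∀ b : Fin 2, b = 0 ∨ b = 1 := by decide
    rcases hcases b1 with rfl | rfl <;> rcases hcases b2 with rfl | rfl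
    · -- b1 = b2 = 0 : contradiction
      exfalso
      have hA2 : ∀ p q : Fin n1 × Fin n2,
          ¬ boxArc (cycArc n1 (fun _ => (0 : Fin 2)) 1)
              (cycArc n2 (fun _ => (0 : Fin 2)) 1) p q := by
        simp [boxArc, cycArc]
      have hall : ∀ v, v ∈ B := by
        intro v
        by_contra hv
        obtain ⟨b, _, hb⟩ := hdom v hv
        exact transGen_empty hA2 hb
      have hne01 : ((0 : Fin n1), (0 : Fin n2)) ≠ ((1 : Fin n1), (0 : Fin n2)) := by
        intro hc
        have := congrArg (fun p : Fin n1 × Fin n2 => (p.1 : ℕ)) hc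
        simp only [h01, h11] at this
        omega
      refine (hind _ (hall _) _ (hall _) hne01).1 (Relation.TransGen.single ?_)
      exact Or.inr ⟨rfl, by simp [cycArc, h01, h11, Nat.mod_eq_of_lt (show 1 < n1 by omega)]⟩
    · -- b1 = 0, b2 = 1 : same length
      refine ⟨?_, by decide⟩
      have hA1 : boxArc (cycArc n1 (fun _ => (0 : Fin 2)) 0)
          (cycArc n2 (fun _ => (1 : Fin 2)) 0)
          = fun p q : Fin n1 × Fin n2 => p.2 = q.2 ∧ (q.1 : ℕ) = ((p.1 : ℕ) + 1) % n1 := by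
        funext p q; simp [boxArc, cycArc]
      have hA2 : boxArc (cycArc n1 (fun _ => (0 : Fin 2)) 1)
          (cycArc n2 (fun _ => (1 : Fin 2)) 1)
          = fun p q : Fin n1 × Fin n2 => p.1 = q.1 ∧ (q.2 : ℕ) = ((p.2 : ℕ) + 1) % n2 := by
        funext p q; simp [boxArc, cycArc]
      rw [hA1] at hind habs
      rw [hA2] at hind hdom
      -- projection to first coordinate is a bijection from B, similarly second
      have hinj1 : ∀ u ∈ B, ∀ v ∈ B, u.1 = v.1 → u = v := by
        intro u hu v hv h
        by_contra hne'
        exact (hind u hu v hv hne').2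
          ((tgFix1 n2 u v).mpr ⟨h, cyc_reach n2 h2 u.2 v.2⟩)
      have hinj2 : ∀ u ∈ B, ∀ v ∈ B, u.2 = v.2 → u = v := by
        intro u hu v hv h
        by_contra hne'
        exact (hind u hu v hv hne').1
          ((tgFix2 n1 u v).mpr ⟨h, cyc_reach n1 h1 u.1 v.1⟩)
      have hsurj1 : ∀ x : Fin n1, ∃ p ∈ B, p.1 = x := by
        intro x
        by_cases hx : (x, (0 : Fin n2)) ∈ B
        · exact ⟨_, hx, rfl⟩
        · obtain ⟨b, hb, hpath⟩ := hdom _ hx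
          exact ⟨b, hb, ((tgFix1 n2 b _).mp hpath).1⟩
      have hsurj2 : ∀ y : Fin n2, ∃ p ∈ B, p.2 = y := by
        intro y
        by_cases hy : ((0 : Fin n1), y) ∈ B
        · exact ⟨_, hy, rfl⟩
        · obtain ⟨b, hb, hpath⟩ := habs _ hy
          exact ⟨b, hb, (((tgFix2 n1 _ b).mp hpath).1).symm⟩
      have e1 : Nat.card B = n1 := by
        have : Function.Bijective (fun p : B => (p : Fin n1 × Fin n2).1) := by
          constructor
          · intro u v h
            exact Subtype.ext (hinj1 u u.2 v v.2 h)
          · intro x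
            obtain ⟨p, hp, hpx⟩ := hsurj1 x
            exact ⟨⟨p, hp⟩, hpx⟩
        rw [Nat.card_eq_of_bijective _ this, Nat.card_eq_fintype_card, Fintype.card_fin]
      have e2 : Nat.card B = n2 := by
        have : Function.Bijective (fun p : B => (p : Fin n1 × Fin n2).2) := by
          constructor
          · intro u v h
            exact Subtype.ext (hinj2 u u.2 v v.2 h)
          · intro y
            obtain ⟨p, hp, hpy⟩ := hsurj2 y
            exact ⟨⟨p, hp⟩, hpy⟩
        rw [Nat.card_eq_of_bijective _ this, Nat.card_eq_fintype_card, Fintype.card_fin]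
      omega
    · -- b1 = 1, b2 = 0 : same length
      refine ⟨?_, by decide⟩
      have hA1 : boxArc (cycArc n1 (fun _ => (1 : Fin 2)) 0)
          (cycArc n2 (fun _ => (0 : Fin 2)) 0)
          = fun p q : Fin n1 × Fin n2 => p.1 = q.1 ∧ (q.2 : ℕ) = ((p.2 : ℕ) + 1) % n2 := by
        funext p q; simp [boxArc, cycArc]
      have hA2 : boxArc (cycArc n1 (fun _ => (1 : Fin 2)) 1)
          (cycArc n2 (fun _ => (0 : Fin 2)) 1)
          = fun p q : Fin n1 × Fin n2 => p.2 = q.2 ∧ (q.1 : ℕ) = ((p.1 : ℕ) + 1) % n1 := by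
        funext p q; simp [boxArc, cycArc]
      rw [hA1] at hind habs
      rw [hA2] at hind hdom
      have hinj1 : ∀ u ∈ B, ∀ v ∈ B, u.1 = v.1 → u = v := by
        intro u hu v hv h
        by_contra hne'
        exact (hind u hu v hv hne').1
          ((tgFix1 n2 u v).mpr ⟨h, cyc_reach n2 h2 u.2 v.2⟩)
      have hinj2 : ∀ u ∈ B, ∀ v ∈ B, u.2 = v.2 → u = v := by
        intro u hu v hv h
        by_contra hne'
        exact (hind u hu v hv hne').2
          ((tgFix2 n1 u v).mpr ⟨h, cyc_reach n1 h1 u.1 v.1⟩)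
      have hsurj1 : ∀ x : Fin n1, ∃ p ∈ B, p.1 = x := by
        intro x
        by_cases hx : (x, (0 : Fin n2)) ∈ B
        · exact ⟨_, hx, rfl⟩
        · obtain ⟨b, hb, hpath⟩ := habs _ hx
          exact ⟨b, hb, (((tgFix1 n2 _ b).mp hpath).1).symm⟩
      have hsurj2 : ∀ y : Fin n2, ∃ p ∈ B, p.2 = y := by
        intro y
        by_cases hy : ((0 : Fin n1), y) ∈ B
        · exact ⟨_, hy, rfl⟩
        · obtain ⟨b, hb, hpath⟩ := hdom _ hy
          exact ⟨b, hb, ((tgFix2 n1 b _).mp hpath).1⟩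
      have e1 : Nat.card B = n1 := by
        have : Function.Bijective (fun p : B => (p : Fin n1 × Fin n2).1) := by
          constructor
          · intro u v h
            exact Subtype.ext (hinj1 u u.2 v v.2 h)
          · intro x
            obtain ⟨p, hp, hpx⟩ := hsurj1 x
            exact ⟨⟨p, hp⟩, hpx⟩
        rw [Nat.card_eq_of_bijective _ this, Nat.card_eq_fintype_card, Fintype.card_fin]
      have e2 : Nat.card B = n2 := by
        have : Function.Bijective (fun p : B => (p : Fin n1 × Fin n2).2) := by
          constructor
          · intro u v h
            exact Subtype.ext (hinj2 u u.2 v v.2 h)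
          · intro y
            obtain ⟨p, hp, hpy⟩ := hsurj2 y
            exact ⟨⟨p, hp⟩, hpy⟩
        rw [Nat.card_eq_of_bijective _ this, Nat.card_eq_fintype_card, Fintype.card_fin]
      omega
    · -- b1 = b2 = 1 : contradiction
      exfalso
      have hA1 : ∀ p q : Fin n1 × Fin n2,
          ¬ boxArc (cycArc n1 (fun _ => (1 : Fin 2)) 0)
              (cycArc n2 (fun _ => (1 : Fin 2)) 0) p q := by
        simp [boxArc, cycArc]
      have hall : ∀ v, v ∈ B := by
        intro v
        by_contra hv
        obtain ⟨b, _, hb⟩ := habs v hv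
        exact transGen_empty hA1 hb
      have hne01 : ((0 : Fin n1), (0 : Fin n2)) ≠ ((1 : Fin n1), (0 : Fin n2)) := by
        intro hc
        have := congrArg (fun p : Fin n1 × Fin n2 => (p.1 : ℕ)) hc
        simp only [h01, h11] at this
        omega
      refine (hind _ (hall _) _ (hall _) hne01).2 (Relation.TransGen.single ?_)
      exact Or.inr ⟨rfl, by simp [cycArc, h01, h11, Nat.mod_eq_of_lt (show 1 < n1 by omega)]⟩
  · rintro ⟨rfl, hne⟩
    refine ⟨{p : Fin n1 × Fin n1 | p.1 = p.2}, ⟨((0 : Fin n1), (0 : Fin n1)), rfl⟩, ?_, ?_, ?_⟩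
      <;> rcases (by decide : ∀ b : Fin 2, b = 0 ∨ b = 1) b1 with rfl | rfl <;>
        rcases (by decide : ∀ b : Fin 2, b = 0 ∨ b = 1) b2 with rfl | rfl <;>
        try exact absurd rfl hne
    all_goals clear hne
    -- independence, two cases
    · intro u hu v hv huv
      have hA1 : boxArc (cycArc n1 (fun _ => (0 : Fin 2)) 0)
          (cycArc n1 (fun _ => (1 : Fin 2)) 0)
          = fun p q : Fin n1 × Fin n1 => p.2 = q.2 ∧ (q.1 : ℕ) = ((p.1 : ℕ) + 1) % n1 := by
        funext p q; simp [boxArc, cycArc]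
      have hA2 : boxArc (cycArc n1 (fun _ => (0 : Fin 2)) 1)
          (cycArc n1 (fun _ => (1 : Fin 2)) 1)
          = fun p q : Fin n1 × Fin n1 => p.1 = q.1 ∧ (q.2 : ℕ) = ((p.2 : ℕ) + 1) % n1 := by
        funext p q; simp [boxArc, cycArc]
      rw [hA1, hA2]
      constructor
      · intro h
        have h2' := ((tgFix2 n1 u v).mp h).1
        exact huv (Prod.ext (hu.trans (h2' ▸ hv.symm)) h2')
      · intro h
        have h1' := ((tgFix1 n1 u v).mp h).1
        exact huv (Prod.ext h1' ((hu.symm.trans h1').trans hv))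
    · intro u hu v hv huv
      have hA1 : boxArc (cycArc n1 (fun _ => (1 : Fin 2)) 0)
          (cycArc n1 (fun _ => (0 : Fin 2)) 0)
          = fun p q : Fin n1 × Fin n1 => p.1 = q.1 ∧ (q.2 : ℕ) = ((p.2 : ℕ) + 1) % n1 := by
        funext p q; simp [boxArc, cycArc]
      have hA2 : boxArc (cycArc n1 (fun _ => (1 : Fin 2)) 1)
          (cycArc n1 (fun _ => (0 : Fin 2)) 1)
          = fun p q : Fin n1 × Fin n1 => p.2 = q.2 ∧ (q.1 : ℕ) = ((p.1 : ℕ) + 1) % n1 := by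
        funext p q; simp [boxArc, cycArc]
      rw [hA1, hA2]
      constructor
      · intro h
        have h1' := ((tgFix1 n1 u v).mp h).1
        exact huv (Prod.ext h1' ((hu.symm.trans h1').trans hv))
      · intro h
        have h2' := ((tgFix2 n1 u v).mp h).1
        exact huv (Prod.ext (hu.trans (h2' ▸ hv.symm)) h2')
    -- absorbance, two cases
    · intro v _
      refine ⟨(v.2, v.2), rfl, ?_⟩
      have hA1 : boxArc (cycArc n1 (fun _ => (0 : Fin 2)) 0)
          (cycArc n1 (fun _ => (1 : Fin 2)) 0)
          = fun p q : Fin n1 × Fin n1 => p.2 = q.2 ∧ (q.1 : ℕ) = ((p.1 : ℕ) + 1) % n1 := by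
        funext p q; simp [boxArc, cycArc]
      rw [hA1]
      exact (tgFix2 n1 v (v.2, v.2)).mpr ⟨rfl, cyc_reach n1 h1 v.1 v.2⟩
    · intro v _
      refine ⟨(v.1, v.1), rfl, ?_⟩
      have hA1 : boxArc (cycArc n1 (fun _ => (1 : Fin 2)) 0)
          (cycArc n1 (fun _ => (0 : Fin 2)) 0)
          = fun p q : Fin n1 × Fin n1 => p.1 = q.1 ∧ (q.2 : ℕ) = ((p.2 : ℕ) + 1) % n1 := by
        funext p q; simp [boxArc, cycArc]
      rw [hA1]
      exact (tgFix1 n1 v (v.1, v.1)).mpr ⟨rfl, cyc_reach n1 h1 v.2 v.1⟩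
    -- dominance, two cases
    · intro v _
      refine ⟨(v.1, v.1), rfl, ?_⟩
      have hA2 : boxArc (cycArc n1 (fun _ => (0 : Fin 2)) 1)
          (cycArc n1 (fun _ => (1 : Fin 2)) 1)
          = fun p q : Fin n1 × Fin n1 => p.1 = q.1 ∧ (q.2 : ℕ) = ((p.2 : ℕ) + 1) % n1 := by
        funext p q; simp [boxArc, cycArc]
      rw [hA2]
      exact (tgFix1 n1 (v.1, v.1) v).mpr ⟨rfl, cyc_reach n1 h1 v.1 v.2⟩
    · intro v _
      refine ⟨(v.2, v.2), rfl, ?_⟩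
      have hA2 : boxArc (cycArc n1 (fun _ => (1 : Fin 2)) 1)
          (cycArc n1 (fun _ => (0 : Fin 2)) 1)
          = fun p q : Fin n1 × Fin n1 => p.2 = q.2 ∧ (q.1 : ℕ) = ((p.1 : ℕ) + 1) % n1 := by
        funext p q; simp [boxArc, cycArc]
      rw [hA2]
      exact (tgFix2 n1 (v.2, v.2) v).mpr ⟨rfl, cyc_reach n1 h1 v.2 v.1⟩
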